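/- Let F : [1,∞) → (0,∞) be nondecreasing with v ln F(v) convex on [1,∞). Among all multi-indices m ∈ ℕ₀^k with ∑_j j·m_j = k and |m| = n, the product ∏_{j=1}^k F(j)^{j·m_j} is at most F(1)^{n−1} F(k−n+1)^{k−n+1}. -/

import Mathlib

open Real Set Finset

/-- If `F` is nondecreasing on `[1,∞)` with `v ln F(v)` convex, then among all
`m ∈ ℕ₀^k` with `∑_j j·m_j = k` and `|m| = n`, the product `∏_j F(j)^{j·m_j}`
is at most `F(1)^{n-1} F(k-n+1)^{k-n+1}`. -/
theorem stmt9 (F : ℝ → ℝ) (k n : ℕ) (hk : 1 ≤ k) (hn : 1 ≤ n) (hnk : n ≤ k)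
    (hFpos : ∀ v ∈ Ici (1:ℝ), 0 < F v)
    (hFmono : MonotoneOn F (Ici 1))
    (hconv : ConvexOn ℝ (Ici 1) (fun v : ℝ => v * Real.log (F v))) :
    ∀ m : Fin k → ℕ,
      (∑ j : Fin k, (j.1 + 1) * m j = k) → (∑ j : Fin k, m j = n) →
      ∏ j : Fin k, F ((j.1 : ℝ) + 1) ^ ((j.1 + 1) * m j) ≤
        F 1 ^ (n - 1) * F ((k : ℝ) - n + 1) ^ (k - n + 1) := by
  intro m h1 h2
  have hkn : (n : ℝ) ≤ k := by exact_mod_cast hnk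
  set g : ℝ → ℝ := fun v => v * Real.log (F v) with hg
  set b : ℝ := (k : ℝ) - n + 1 with hbdef
  have hb1 : (1 : ℝ) ≤ b := by rw [hbdef]; linarith
  -- the natural-number fact: ∑ j * m j = k - n
  have hsum3 : ∑ j : Fin k, j.1 * m j = k - n := by
    have hsplit : ∑ j : Fin k, (j.1 + 1) * m j
        = ∑ j : Fin k, j.1 * m j + ∑ j : Fin k, m j := by
      rw [← Finset.sum_add_distrib]
      exact Finset.sum_congr rfl (fun j _ => by ring)
    omega
  have hjle : ∀ j : Fin k, m j ≠ 0 → (j.1 : ℝ) + 1 ≤ b := by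
    intro j hj
    have h4 : j.1 * m j ≤ k - n := by
      rw [← hsum3]
      exact Finset.single_le_sum (f := fun j : Fin k => j.1 * m j)
        (fun i _ => Nat.zero_le _) (Finset.mem_univ j)
    have h5 : j.1 ≤ k - n := le_trans
      (Nat.le_mul_of_pos_right _ (Nat.pos_of_ne_zero hj)) h4
    have h6 : (j.1 : ℝ) ≤ ((k - n : ℕ) : ℝ) := by exact_mod_cast h5
    rw [Nat.cast_sub hnk] at h6
    rw [hbdef]; linarith
  -- sums cast to ℝ
  have e1 : (∑ j : Fin k, (m j : ℝ) * ((j.1 : ℝ) + 1)) = k := by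
    have := h1
    have : ((∑ j : Fin k, (j.1 + 1) * m j : ℕ) : ℝ) = k := by exact_mod_cast this
    push_cast at this
    rw [← this]
    exact Finset.sum_congr rfl (fun j _ => by ring)
  have e2 : (∑ j : Fin k, (m j : ℝ)) = n := by exact_mod_cast h2
  -- key inequality on the log scale
  have key : (∑ j : Fin k, (m j : ℝ) * g ((j.1 : ℝ) + 1))
      ≤ ((n : ℝ) - 1) * g 1 + g b := by
    rcases eq_or_lt_of_le hkn with heq | hlt
    · -- k = n, b = 1
      have hb : b = 1 := by rw [hbdef]; linarith
      have hterm : ∀ j : Fin k, (m j : ℝ) * g ((j.1 : ℝ) + 1) = (m j : ℝ) * g 1 := by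
        intro j
        by_cases hj : m j = 0
        · simp [hj]
        · have hle := hjle j hj
          rw [hb] at hle
          have hge : (0 : ℝ) ≤ (j.1 : ℝ) := by positivity
          have : (j.1 : ℝ) + 1 = 1 := by linarith
          rw [this]
      rw [Finset.sum_congr rfl (fun j _ => hterm j), ← Finset.sum_mul, e2, hb]
      apply le_of_eq; ring
    · -- n < k
      have hbgt : (1 : ℝ) < b := by rw [hbdef]; linarith
      have hbne : b - 1 ≠ 0 := by linarith
      have term : ∀ j : Fin k, (m j : ℝ) * g ((j.1 : ℝ) + 1) ≤
          (m j : ℝ) * ((b - ((j.1 : ℝ) + 1)) / (b - 1) * g 1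
            + (j.1 : ℝ) / (b - 1) * g b) := by
        intro j
        by_cases hj : m j = 0
        · simp [hj]
        · apply mul_le_mul_of_nonneg_left _ (by positivity)
          have hjb := hjle j hj
          have hj0 : (0 : ℝ) ≤ (j.1 : ℝ) := by positivity
          have ha : 0 ≤ (b - ((j.1 : ℝ) + 1)) / (b - 1) := by
            apply div_nonneg <;> linarith
          have hc : 0 ≤ (j.1 : ℝ) / (b - 1) := by apply div_nonneg <;> linarith
          have habc : (b - ((j.1 : ℝ) + 1)) / (b - 1) + (j.1 : ℝ) / (b - 1) = 1 := by
            field_simp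
            ring
          have hcomb := hconv.2 (Set.self_mem_Ici) (show b ∈ Ici (1:ℝ) from hb1) ha hc habc
          have heq2 : ((b - ((j.1 : ℝ) + 1)) / (b - 1)) • (1 : ℝ)
              + ((j.1 : ℝ) / (b - 1)) • b = (j.1 : ℝ) + 1 := by
            rw [smul_eq_mul, smul_eq_mul]
            field_simp
            ring
          rw [heq2] at hcomb
          simpa [smul_eq_mul, hg] using hcomb
      calc (∑ j : Fin k, (m j : ℝ) * g ((j.1 : ℝ) + 1))
          ≤ ∑ j : Fin k, (m j : ℝ) * ((b - ((j.1 : ℝ) + 1)) / (b - 1) * g 1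
              + (j.1 : ℝ) / (b - 1) * g b) :=
            Finset.sum_le_sum (fun j _ => term j)
        _ = ∑ j : Fin k, ((b * g 1 - g b) / (b - 1) * (m j : ℝ)
              + (g b - g 1) / (b - 1) * ((m j : ℝ) * ((j.1 : ℝ) + 1))) :=
            Finset.sum_congr rfl (fun j _ => by field_simp; ring)
        _ = (b * g 1 - g b) / (b - 1) * (∑ j : Fin k, (m j : ℝ))
            + (g b - g 1) / (b - 1) * (∑ j : Fin k, (m j : ℝ) * ((j.1 : ℝ) + 1)) := by
            rw [Finset.sum_add_distrib, ← Finset.mul_sum, ← Finset.mul_sum]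
        _ = ((n : ℝ) - 1) * g 1 + g b := by
            rw [e1, e2]
            have hne : (k : ℝ) - n ≠ 0 := by linarith
            rw [hbdef]
            have hb' : (k : ℝ) - n + 1 - 1 = k - n := by ring
            rw [hb']
            field_simp
            ring
  -- positivity of the factors
  have hF1 : 0 < F 1 := hFpos 1 (by norm_num)
  have hFb : 0 < F b := hFpos b hb1
  have hFj : ∀ j : Fin k, 0 < F ((j.1 : ℝ) + 1) := fun j =>
    hFpos _ (by simp only [Set.mem_Ici]; have : (0:ℝ) ≤ (j.1:ℝ) := Nat.cast_nonneg _; linarith)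
  have hL : 0 < ∏ j : Fin k, F ((j.1 : ℝ) + 1) ^ ((j.1 + 1) * m j) :=
    Finset.prod_pos (fun j _ => pow_pos (hFj j) _)
  have hR : 0 < F 1 ^ (n - 1) * F b ^ (k - n + 1) := by positivity
  rw [show F ((k : ℝ) - n + 1) = F b from by rw [hbdef]]
  rw [← Real.log_le_log_iff hL hR]
  rw [Real.log_prod (fun j _ => (pow_pos (hFj j) _).ne'),
    Real.log_mul (by positivity) (by positivity), Real.log_pow, Real.log_pow]
  have lhs_eq : (∑ j : Fin k, Real.log (F ((j.1 : ℝ) + 1) ^ ((j.1 + 1) * m j)))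
      = ∑ j : Fin k, (m j : ℝ) * g ((j.1 : ℝ) + 1) := by
    refine Finset.sum_congr rfl (fun j _ => ?_)
    rw [Real.log_pow, hg]
    push_cast
    ring
  rw [lhs_eq]
  have cast1 : ((n - 1 : ℕ) : ℝ) = (n : ℝ) - 1 := by
    rw [Nat.cast_sub hn]; norm_num
  have cast2 : ((k - n + 1 : ℕ) : ℝ) = b := by
    rw [hbdef]; push_cast [Nat.cast_sub hnk]; ring
  rw [cast1, cast2]
  calc (∑ j : Fin k, (m j : ℝ) * g ((j.1 : ℝ) + 1))
      ≤ ((n : ℝ) - 1) * g 1 + g b := key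
    _ = ((n : ℝ) - 1) * Real.log (F 1) + b * Real.log (F b) := by
        simp only [hg]; ring
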